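/- Let q ≥ 2 and N ≥ 2 be integers and let n ∈ S_{q,N}. Then for any deletion types j₁, j₂ ∈ {0,…,q−1}, any positions i₁, i₁′ ∈ {1,…,N}, and any positions i₂, i₂′ ∈ {1,…,N−1}, one has K_{j₁,i₂}(K_{j₂,i₁} D_n) = K_{j₂,i₂′}(K_{j₁,i₁′} D_n); i.e., the composite action of two deletions on a Dicke state depends neither on the order of the deletion types nor on the positions at which they are applied. -/
import Mathlib


/-- The discrete simplex `S_{q,N}`: tuples of naturals of length `q` summing to `N`. -/
def simplex (q N : ℕ) : Finset (Fin q → ℕ) := Finset.Nat.antidiagonalTuple q N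

/-- Multinomial coefficient `C(∑ n; n)` for a tuple of naturals. -/
def multinat {q : ℕ} (n : Fin q → ℕ) : ℕ := Nat.multinomial Finset.univ n

/-- Multinomial coefficient for an integer tuple: `0` if some entry is negative. -/
def multZ {q : ℕ} (n : Fin q → ℤ) : ℕ :=
  if ∀ i, 0 ≤ n i then Nat.multinomial Finset.univ (fun i => (n i).toNat) else 0

/-- The `N`-qudit space `H_{q,N}`: complex-valued functions on strings `Fin N → Fin q`. -/
abbrev Hsp (q N : ℕ) := (Fin N → Fin q) → ℂ

/-- The inner product `⟨u,v⟩ = ∑_x conj (u x) · v x` on `H_{q,N}`. -/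
noncomputable def hinner {q N : ℕ} (u v : Hsp q N) : ℂ :=
  ∑ x : Fin N → Fin q, (starRingEnd ℂ) (u x) * v x

/-- The composition of a string `x : Fin N → Fin q`: `compn x i = #{k : x k = i}`. -/
def compn {q N : ℕ} (x : Fin N → Fin q) : Fin q → ℕ :=
  fun i => (Finset.univ.filter (fun k => x k = i)).card

/-- The Dicke state `D_n = C(N;n)^{-1/2} ∑_{x : comp x = n} δ_x`. -/
noncomputable def dicke {q N : ℕ} (n : Fin q → ℕ) : Hsp q N :=
  fun x => if compn x = n then (((Real.sqrt (multinat n))⁻¹ : ℝ) : ℂ) else 0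

/-- The type-`j` deletion operator at position `i`: `(delAt j i v) y = v (y with j inserted
at position i)`; equivalently `delAt j i δ_x = [x i = j] · δ_{x∼i}`. -/
def delAt {q M : ℕ} (j : Fin q) (i : Fin (M + 1)) (v : Hsp q (M + 1)) : Hsp q M :=
  fun y => v (i.insertNth j y)

/-- the composite action of two single deletions on a Dicke state depends
neither on the order of the deletion types nor on the positions at which they are applied.
(Here `N = M + 2 ≥ 2` and `q ≥ 2`.) -/
lemma compn_insertNth {q M : ℕ} (j : Fin q) (i : Fin (M + 1)) (y : Fin M → Fin q) :
    compn (i.insertNth j y) = fun k => (if j = k then 1 else 0) + compn y k := by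
  funext k
  simp only [compn, Finset.card_filter]
  rw [Fin.sum_univ_succAbove _ i]
  simp

theorem deletions_commute_on_dicke (q M : ℕ) (hq : 2 ≤ q) (n : Fin q → ℕ)
    (hn : ∑ i, n i = M + 2) (j₁ j₂ : Fin q)
    (i₁ i₁' : Fin (M + 2)) (i₂ i₂' : Fin (M + 1)) :
    delAt j₁ i₂ (delAt j₂ i₁ (dicke n)) = delAt j₂ i₂' (delAt j₁ i₁' (dicke n)) := by
  funext y
  simp only [delAt, dicke, compn_insertNth]
  have h : (fun k => (if j₂ = k then 1 else 0) + ((if j₁ = k then 1 else 0) + compn y k))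
      = fun k => (if j₁ = k then 1 else 0) + ((if j₂ = k then 1 else 0) + compn y k) := by
    funext k; ring
  rw [h]
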